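/- Let F : X → ℝ be a non-decreasing, differentiable, DR-submodular function on a compact rectangle X = ∏_{i=1}^n [ℓ_i, u_i] with ℓ_i < u_i for all i, and suppose (∂F/∂x_i)(x̂) ≤ M for all x̂ ∈ X and all i. Then for all x, x̂ ∈ X: 0 ≤ F̆(x; x̂) − F̃(x; x̂) ≤ Σ_{i=1}^n (∂F/∂x_i)(x̂) · (u_i − ℓ_i) ≤ M · Σ_{i=1}^n (u_i − ℓ_i). Consequently, 0 ≤ inf_{x̂ ∈ X} F̆(x; x̂) − F(x) ≤ M · ‖u − ℓ‖₁ for all x ∈ X, so the gap between the approximate overestimator and F tends to 0 as ‖u − ℓ‖₁ → 0. -/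

import Mathlib

open Set Filter Topology

section aux
variable {n : ℕ} {ℓ u : Fin n → ℝ} {F : (Fin n → ℝ) → ℝ}

private lemma line_apply (z : Fin n → ℝ) (i : Fin n) (t : ℝ) (j : Fin n) :
    (z + t • (Pi.single i 1 : Fin n → ℝ)) j = if j = i then z j + t else z j := by
  rcases eq_or_ne j i with rfl | hj
  · simp
  · simp [Pi.single_apply, hj]

private lemma line_mem {z : Fin n → ℝ} (hz : z ∈ Set.Icc ℓ u) (i : Fin n) {t : ℝ}
    (h1 : ℓ i - z i ≤ t) (h2 : t ≤ u i - z i) :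
    z + t • (Pi.single i 1 : Fin n → ℝ) ∈ Set.Icc ℓ u := by
  constructor <;> intro j <;> rw [line_apply] <;> split <;> rename_i h
  · subst h; linarith
  · exact hz.1 j
  · subst h; linarith
  · exact hz.2 j

private lemma hasDerivAt_line (hdiff : Differentiable ℝ F) (z : Fin n → ℝ) (i : Fin n) :
    HasDerivAt (fun t : ℝ => F (z + t • (Pi.single i 1 : Fin n → ℝ)))
      (fderiv ℝ F z (Pi.single i 1)) 0 := by
  have hc : HasDerivAt (fun t : ℝ => z + t • (Pi.single i 1 : Fin n → ℝ))
      (Pi.single i 1) 0 := by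
    simpa using (((hasDerivAt_id (0:ℝ)).smul_const (Pi.single i 1 : Fin n → ℝ)).const_add z)
  have := (hdiff (z + (0:ℝ) • (Pi.single i 1 : Fin n → ℝ))).hasFDerivAt.comp_hasDerivAt 0 hc
  simp at this; exact this

private lemma grad_nonneg (hlu : ∀ i, ℓ i < u i) (hdiff : Differentiable ℝ F)
    (hmono : ∀ x ∈ Set.Icc ℓ u, ∀ y ∈ Set.Icc ℓ u, x ≤ y → F x ≤ F y)
    {z : Fin n → ℝ} (hz : z ∈ Set.Icc ℓ u) (i : Fin n) :
    0 ≤ fderiv ℝ F z (Pi.single i 1) := by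
  set f : ℝ → ℝ := fun t => F (z + t • (Pi.single i 1 : Fin n → ℝ)) with hf
  have hd : HasDerivAt f (fderiv ℝ F z (Pi.single i 1)) 0 := hasDerivAt_line hdiff z i
  have hslope := hasDerivAt_iff_tendsto_slope.1 hd
  have hf0 : f 0 = F z := by simp [hf]
  rcases lt_or_eq_of_le (hz.2 i) with hiu | hiu
  · have h2 : Tendsto (slope f 0) (nhdsWithin (0:ℝ) (Set.Ioi 0))
        (nhds (fderiv ℝ F z (Pi.single i 1))) :=
      hslope.mono_left (nhdsWithin_mono _ (fun t ht => Set.mem_compl_singleton_iff.2 (ne_of_gt ht)))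
    refine ge_of_tendsto h2 ?_
    filter_upwards [Ioo_mem_nhdsGT_of_mem (⟨le_rfl, sub_pos.2 hiu⟩ :
      (0:ℝ) ∈ Set.Ico 0 (u i - z i))] with t ht
    have hmem : z + t • (Pi.single i 1 : Fin n → ℝ) ∈ Set.Icc ℓ u :=
      line_mem hz i (by linarith [hz.1 i, ht.1]) (le_of_lt ht.2)
    have hzle : z ≤ z + t • (Pi.single i 1 : Fin n → ℝ) := by
      intro j; rw [line_apply]; split
      · linarith [ht.1]
      · exact le_rfl
    have hFle := hmono z hz _ hmem hzle
    rw [slope_def_field, hf0, sub_zero]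
    exact div_nonneg (by simpa [hf] using sub_nonneg.2 hFle) (le_of_lt ht.1)
  · have hil : ℓ i < z i := by rw [hiu]; exact hlu i
    have h2 : Tendsto (slope f 0) (nhdsWithin (0:ℝ) (Set.Iio 0))
        (nhds (fderiv ℝ F z (Pi.single i 1))) :=
      hslope.mono_left (nhdsWithin_mono _ (fun t ht => Set.mem_compl_singleton_iff.2 (ne_of_lt ht)))
    refine ge_of_tendsto h2 ?_
    filter_upwards [Ioo_mem_nhdsLT_of_mem (⟨sub_neg.2 hil, le_rfl⟩ :
      (0:ℝ) ∈ Set.Ioc (ℓ i - z i) 0)] with t ht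
    have hmem : z + t • (Pi.single i 1 : Fin n → ℝ) ∈ Set.Icc ℓ u :=
      line_mem hz i (le_of_lt ht.1) (by linarith [hz.2 i, ht.2])
    have hzle : z + t • (Pi.single i 1 : Fin n → ℝ) ≤ z := by
      intro j; rw [line_apply]; split
      · linarith [ht.2]
      · exact le_rfl
    have hFle := hmono _ hmem z hz hzle
    rw [slope_def_field, hf0, sub_zero, ← neg_div_neg_eq]
    exact div_nonneg (by simp [hf] at hFle ⊢; linarith) (by linarith [ht.2])

private lemma single_eq_smul (i : Fin n) (s : ℝ) :
    (Pi.single i s : Fin n → ℝ) = s • (Pi.single i 1 : Fin n → ℝ) := by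
  funext j
  rcases eq_or_ne j i with rfl | hj
  · simp
  · simp [Pi.single_apply, hj]

private lemma tangent (hdiff : Differentiable ℝ F)
    (hconc : ∀ (i : Fin n), ∀ x ∈ Set.Icc ℓ u,
      ConcaveOn ℝ {t : ℝ | x + Pi.single i t ∈ Set.Icc ℓ u}
        (fun t : ℝ => F (x + Pi.single i t)))
    {xh : Fin n → ℝ} (hxh : xh ∈ Set.Icc ℓ u) (i : Fin n)
    {s : ℝ} (hs : 0 ≤ s) (hsu : xh i + s ≤ u i) :
    F (xh + Pi.single i s) ≤ F xh + fderiv ℝ F xh (Pi.single i 1) * s := by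
  rcases eq_or_lt_of_le hs with rfl | hs0
  · simp
  set q : ℝ → ℝ := fun t => F (xh + Pi.single i t) with hq
  have hqline : q = fun t : ℝ => F (xh + t • (Pi.single i 1 : Fin n → ℝ)) := by
    funext t
    show F (xh + Pi.single i t) = _
    rw [single_eq_smul i t]
  have hd : HasDerivAt q (fderiv ℝ F xh (Pi.single i 1)) 0 := by
    rw [hqline]; exact hasDerivAt_line hdiff xh i
  have hq0 : q 0 = F xh := by simp [hq]
  have hmem0 : (0:ℝ) ∈ {t : ℝ | xh + Pi.single i t ∈ Set.Icc ℓ u} := by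
    simp only [Set.mem_setOf_eq, Pi.single_zero, add_zero]; exact hxh
  have hmems : s ∈ {t : ℝ | xh + Pi.single i t ∈ Set.Icc ℓ u} := by
    rw [Set.mem_setOf_eq, single_eq_smul]
    exact line_mem hxh i (by linarith [hxh.1 i]) (by linarith)
  have key : (q s - q 0) / s ≤ fderiv ℝ F xh (Pi.single i 1) := by
    have h2 : Tendsto (slope q 0) (nhdsWithin (0:ℝ) (Set.Ioi 0))
        (nhds (fderiv ℝ F xh (Pi.single i 1))) :=
      (hasDerivAt_iff_tendsto_slope.1 hd).mono_left
        (nhdsWithin_mono _ (fun t ht => Set.mem_compl_singleton_iff.2 (ne_of_gt ht)))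
    refine ge_of_tendsto h2 ?_
    filter_upwards [Ioo_mem_nhdsGT_of_mem (⟨le_rfl, hs0⟩ : (0:ℝ) ∈ Set.Ico 0 s)] with t ht
    have ht0 : (0:ℝ) < t := ht.1
    have hts : t < s := ht.2
    have hc := (hconc i xh hxh).2 hmem0 hmems
      (show (0:ℝ) ≤ 1 - t/s by rw [sub_nonneg, div_le_one hs0]; exact le_of_lt hts)
      (show (0:ℝ) ≤ t/s by positivity) (by ring)
    have harg : (1 - t/s) • (0:ℝ) + (t/s) • s = t := by
      rw [smul_zero, zero_add, smul_eq_mul, div_mul_cancel₀ t hs0.ne']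
    rw [harg] at hc
    have hc' : (1 - t/s) * q 0 + (t/s) * q s ≤ q t := hc
    rw [slope_def_field, sub_zero, div_le_div_iff₀ hs0 ht0]
    have h5 : (1 - t/s) * q 0 + (t/s) * q s = q 0 + (t/s) * (q s - q 0) := by ring
    have h7 : (t/s) * (q s - q 0) ≤ q t - q 0 := by rw [h5] at hc'; linarith
    have h8 := mul_le_mul_of_nonneg_left h7 (le_of_lt hs0)
    have h9 : s * ((t/s) * (q s - q 0)) = t * (q s - q 0) := by
      field_simp
    linarith [h8, h9]
  rw [hq0] at key
  have hkey := (div_le_iff₀ hs0).1 key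
  have hqs : q s = F (xh + Pi.single i s) := rfl
  linarith [hkey]

end aux

section aux2
variable {n : ℕ} {ℓ u : Fin n → ℝ} {F : (Fin n → ℝ) → ℝ}

private lemma step' (hdiff : Differentiable ℝ F)
    (hsub : ∀ x ∈ Set.Icc ℓ u, ∀ y ∈ Set.Icc ℓ u, F (x ⊔ y) + F (x ⊓ y) ≤ F x + F y)
    (hconc : ∀ (i : Fin n), ∀ x ∈ Set.Icc ℓ u,
      ConcaveOn ℝ {t : ℝ | x + Pi.single i t ∈ Set.Icc ℓ u}
        (fun t : ℝ => F (x + Pi.single i t)))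
    {xh z : Fin n → ℝ} (hxh : xh ∈ Set.Icc ℓ u) (hz : z ∈ Set.Icc ℓ u)
    (hle : xh ≤ z) (i : Fin n) (hzi : z i = xh i) {s : ℝ} (hs : 0 ≤ s)
    (hsu : z i + s ≤ u i) :
    F (z + Pi.single i s) ≤ F z + fderiv ℝ F xh (Pi.single i 1) * s := by
  have hxis : xh i + s ≤ u i := by rw [← hzi]; exact hsu
  have hx' : xh + Pi.single i s ∈ Set.Icc ℓ u := by
    rw [single_eq_smul]; exact line_mem hxh i (by linarith [hxh.1 i]) (by linarith)
  have hsup : (xh + Pi.single i s) ⊔ z = z + Pi.single i s := by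
    funext j
    rcases eq_or_ne j i with rfl | hj
    · simp only [Pi.sup_apply, Pi.add_apply, Pi.single_eq_same]
      rw [hzi]
      exact sup_eq_left.2 (by linarith)
    · simp only [Pi.sup_apply, Pi.add_apply, Pi.single_eq_of_ne hj, add_zero]
      exact sup_eq_right.2 (hle j)
  have hinf : (xh + Pi.single i s) ⊓ z = xh := by
    funext j
    rcases eq_or_ne j i with rfl | hj
    · simp only [Pi.inf_apply, Pi.add_apply, Pi.single_eq_same]
      rw [hzi]
      exact inf_eq_right.2 (by linarith)
    · simp only [Pi.inf_apply, Pi.add_apply, Pi.single_eq_of_ne hj, add_zero]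
      exact inf_eq_left.2 (hle j)
  have h1 := hsub (xh + Pi.single i s) hx' z hz
  rw [hsup, hinf] at h1
  have h2 := tangent hdiff hconc hxh i hs hxis
  linarith

private lemma overest (hdiff : Differentiable ℝ F)
    (hsub : ∀ x ∈ Set.Icc ℓ u, ∀ y ∈ Set.Icc ℓ u, F (x ⊔ y) + F (x ⊓ y) ≤ F x + F y)
    (hconc : ∀ (i : Fin n), ∀ x ∈ Set.Icc ℓ u,
      ConcaveOn ℝ {t : ℝ | x + Pi.single i t ∈ Set.Icc ℓ u}
        (fun t : ℝ => F (x + Pi.single i t)))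
    (hmono : ∀ x ∈ Set.Icc ℓ u, ∀ y ∈ Set.Icc ℓ u, x ≤ y → F x ≤ F y)
    {x xh : Fin n → ℝ} (hx : x ∈ Set.Icc ℓ u) (hxh : xh ∈ Set.Icc ℓ u) :
    F x ≤ F xh + ∑ i : Fin n, fderiv ℝ F xh (Pi.single i 1) * max (x i - xh i) 0 := by
  have key : ∀ S : Finset (Fin n),
      F (fun j => if j ∈ S then x j ⊔ xh j else xh j)
        ≤ F xh + ∑ i ∈ S, fderiv ℝ F xh (Pi.single i 1) * max (x i - xh i) 0 := by
    intro S
    induction S using Finset.induction_on with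
    | empty => simp
    | @insert i S hiS ih =>
      set zS : Fin n → ℝ := fun j => if j ∈ S then x j ⊔ xh j else xh j with hzSdef
      have hzS : zS ∈ Set.Icc ℓ u := by
        constructor <;> intro j <;> simp only [hzSdef] <;> split
        · exact le_trans (hx.1 j) le_sup_left
        · exact hxh.1 j
        · exact sup_le (hx.2 j) (hxh.2 j)
        · exact hxh.2 j
      have hlez : xh ≤ zS := by
        intro j; simp only [hzSdef]; split
        · exact le_sup_right
        · exact le_rfl
      have hzi : zS i = xh i := by simp [hzSdef, hiS]
      set s : ℝ := (x i ⊔ xh i) - xh i with hsdef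
      have hs : 0 ≤ s := by simp [hsdef]
      have hsu : zS i + s ≤ u i := by
        rw [hzi, hsdef]
        have : x i ⊔ xh i ≤ u i := sup_le (hx.2 i) (hxh.2 i)
        linarith
      have heq : (fun j => if j ∈ insert i S then x j ⊔ xh j else xh j)
          = zS + Pi.single i s := by
        funext j
        rcases eq_or_ne j i with rfl | hj
        · simp only [Finset.mem_insert, true_or, if_true, Pi.add_apply,
            Pi.single_eq_same, hzi, hsdef]
          ring
        · simp only [Finset.mem_insert, hj, false_or, Pi.add_apply,
            Pi.single_eq_of_ne hj, add_zero, hzSdef]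
      have hstep := step' hdiff hsub hconc hxh hzS hlez i hzi hs hsu
      rw [heq, Finset.sum_insert hiS]
      have hsmax : s = max (x i - xh i) 0 := by
        rw [hsdef]
        rcases le_total (x i) (xh i) with h | h
        · rw [sup_eq_right.2 h, max_eq_right (by linarith)]; ring
        · rw [sup_eq_left.2 h, max_eq_left (by linarith)]
      rw [← hsmax]
      linarith
  have hkey := key Finset.univ
  simp only [Finset.mem_univ, if_true] at hkey
  have hsupmem : (fun j => x j ⊔ xh j) ∈ Set.Icc ℓ u :=
    ⟨fun j => le_trans (hx.1 j) le_sup_left, fun j => sup_le (hx.2 j) (hxh.2 j)⟩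
  have hxle : x ≤ fun j => x j ⊔ xh j := fun j => le_sup_left
  exact le_trans (hmono x hx _ hsupmem hxle) hkey

end aux2


/-- the gap of the approximate overestimator shrinks with the rectangle.
For a non-decreasing, differentiable, DR-submodular `F` on the compact rectangle
`X = Icc ℓ u` (with `ℓ i < u i`) whose partial derivatives on `X` are bounded above by `M`:
for all `x, x̂ ∈ X`,
`0 ≤ F̆(x; x̂) − F̃(x; x̂) ≤ ∑ i (∂F/∂x_i)(x̂)·(u_i − ℓ_i) ≤ M·∑ i (u_i − ℓ_i)`,
and consequently `0 ≤ inf_{x̂ ∈ X} F̆(x; x̂) − F x ≤ M·‖u − ℓ‖₁` for all `x ∈ X`.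
(`xh` plays the role of `x̂`.) -/
theorem stmt_15 {n : ℕ} (hn : 1 ≤ n) (ℓ u : Fin n → ℝ) (hlu : ∀ i, ℓ i < u i)
    (F : (Fin n → ℝ) → ℝ) (hdiff : Differentiable ℝ F)
    (hsub : ∀ x ∈ Set.Icc ℓ u, ∀ y ∈ Set.Icc ℓ u, F (x ⊔ y) + F (x ⊓ y) ≤ F x + F y)
    (hconc : ∀ (i : Fin n), ∀ x ∈ Set.Icc ℓ u,
      ConcaveOn ℝ {t : ℝ | x + Pi.single i t ∈ Set.Icc ℓ u}
        (fun t : ℝ => F (x + Pi.single i t)))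
    (hmono : ∀ x ∈ Set.Icc ℓ u, ∀ y ∈ Set.Icc ℓ u, x ≤ y → F x ≤ F y)
    (M : ℝ) (hM : ∀ xh ∈ Set.Icc ℓ u, ∀ i : Fin n, fderiv ℝ F xh (Pi.single i 1) ≤ M) :
    (∀ x ∈ Set.Icc ℓ u, ∀ xh ∈ Set.Icc ℓ u,
      0 ≤ (F xh + ∑ i : Fin n,
              fderiv ℝ F xh (Pi.single i 1) * ((u i - xh i) / (u i - ℓ i)) * (x i - ℓ i))
          - (F xh + ∑ i : Fin n, fderiv ℝ F xh (Pi.single i 1) * max (x i - xh i) 0)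
      ∧ (F xh + ∑ i : Fin n,
              fderiv ℝ F xh (Pi.single i 1) * ((u i - xh i) / (u i - ℓ i)) * (x i - ℓ i))
          - (F xh + ∑ i : Fin n, fderiv ℝ F xh (Pi.single i 1) * max (x i - xh i) 0)
        ≤ ∑ i : Fin n, fderiv ℝ F xh (Pi.single i 1) * (u i - ℓ i)
      ∧ ∑ i : Fin n, fderiv ℝ F xh (Pi.single i 1) * (u i - ℓ i)
        ≤ M * ∑ i : Fin n, (u i - ℓ i))
    ∧ (∀ x ∈ Set.Icc ℓ u,
      0 ≤ sInf {v : ℝ | ∃ xh ∈ Set.Icc ℓ u,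
            v = F xh + ∑ i : Fin n,
              fderiv ℝ F xh (Pi.single i 1) * ((u i - xh i) / (u i - ℓ i)) * (x i - ℓ i)}
          - F x
      ∧ sInf {v : ℝ | ∃ xh ∈ Set.Icc ℓ u,
            v = F xh + ∑ i : Fin n,
              fderiv ℝ F xh (Pi.single i 1) * ((u i - xh i) / (u i - ℓ i)) * (x i - ℓ i)}
          - F x
        ≤ M * ∑ i : Fin n, (u i - ℓ i)) := by
  -- termwise inequalities
  have hterm1 : ∀ x ∈ Set.Icc ℓ u, ∀ xh ∈ Set.Icc ℓ u, ∀ i : Fin n,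
      fderiv ℝ F xh (Pi.single i 1) * max (x i - xh i) 0
        ≤ fderiv ℝ F xh (Pi.single i 1) * ((u i - xh i) / (u i - ℓ i)) * (x i - ℓ i) := by
    intro x hx xh hxh i
    have hg := grad_nonneg hlu hdiff hmono hxh i
    have hul : (0:ℝ) < u i - ℓ i := sub_pos.2 (hlu i)
    have hkey : max (x i - xh i) 0 ≤ ((u i - xh i) / (u i - ℓ i)) * (x i - ℓ i) := by
      apply max_le
      · rw [div_mul_eq_mul_div, le_div_iff₀ hul]
        nlinarith [mul_nonneg (sub_nonneg.2 (hxh.1 i)) (sub_nonneg.2 (hx.2 i))]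
      · exact mul_nonneg (div_nonneg (by linarith [hxh.2 i]) (le_of_lt hul))
          (by linarith [hx.1 i])
    calc fderiv ℝ F xh (Pi.single i 1) * max (x i - xh i) 0
        ≤ fderiv ℝ F xh (Pi.single i 1) * (((u i - xh i) / (u i - ℓ i)) * (x i - ℓ i)) :=
          mul_le_mul_of_nonneg_left hkey hg
      _ = fderiv ℝ F xh (Pi.single i 1) * ((u i - xh i) / (u i - ℓ i)) * (x i - ℓ i) := by
          ring
  have hterm2 : ∀ x ∈ Set.Icc ℓ u, ∀ xh ∈ Set.Icc ℓ u, ∀ i : Fin n,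
      fderiv ℝ F xh (Pi.single i 1) * ((u i - xh i) / (u i - ℓ i)) * (x i - ℓ i)
        - fderiv ℝ F xh (Pi.single i 1) * max (x i - xh i) 0
        ≤ fderiv ℝ F xh (Pi.single i 1) * (u i - ℓ i) := by
    intro x hx xh hxh i
    have hg := grad_nonneg hlu hdiff hmono hxh i
    have hul : (0:ℝ) < u i - ℓ i := sub_pos.2 (hlu i)
    have hB : 0 ≤ fderiv ℝ F xh (Pi.single i 1) * max (x i - xh i) 0 :=
      mul_nonneg hg (le_max_right _ _)
    have hr1 : (u i - xh i) / (u i - ℓ i) ≤ 1 := by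
      rw [div_le_one hul]; linarith [hxh.1 i]
    have hr0 : 0 ≤ (u i - xh i) / (u i - ℓ i) :=
      div_nonneg (by linarith [hxh.2 i]) (le_of_lt hul)
    have hA : fderiv ℝ F xh (Pi.single i 1) * ((u i - xh i) / (u i - ℓ i)) * (x i - ℓ i)
        ≤ fderiv ℝ F xh (Pi.single i 1) * (u i - ℓ i) := by
      have h1 : ((u i - xh i) / (u i - ℓ i)) * (x i - ℓ i) ≤ u i - ℓ i := by
        calc ((u i - xh i) / (u i - ℓ i)) * (x i - ℓ i)
            ≤ 1 * (u i - ℓ i) := by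
              apply mul_le_mul hr1 (by linarith [hx.2 i]) (by linarith [hx.1 i]) zero_le_one
          _ = u i - ℓ i := one_mul _
      calc fderiv ℝ F xh (Pi.single i 1) * ((u i - xh i) / (u i - ℓ i)) * (x i - ℓ i)
          = fderiv ℝ F xh (Pi.single i 1) * (((u i - xh i) / (u i - ℓ i)) * (x i - ℓ i)) := by
            ring
        _ ≤ fderiv ℝ F xh (Pi.single i 1) * (u i - ℓ i) := mul_le_mul_of_nonneg_left h1 hg
    linarith
  have hpart1 : ∀ x ∈ Set.Icc ℓ u, ∀ xh ∈ Set.Icc ℓ u,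
      0 ≤ (F xh + ∑ i : Fin n,
              fderiv ℝ F xh (Pi.single i 1) * ((u i - xh i) / (u i - ℓ i)) * (x i - ℓ i))
          - (F xh + ∑ i : Fin n, fderiv ℝ F xh (Pi.single i 1) * max (x i - xh i) 0)
      ∧ (F xh + ∑ i : Fin n,
              fderiv ℝ F xh (Pi.single i 1) * ((u i - xh i) / (u i - ℓ i)) * (x i - ℓ i))
          - (F xh + ∑ i : Fin n, fderiv ℝ F xh (Pi.single i 1) * max (x i - xh i) 0)
        ≤ ∑ i : Fin n, fderiv ℝ F xh (Pi.single i 1) * (u i - ℓ i)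
      ∧ ∑ i : Fin n, fderiv ℝ F xh (Pi.single i 1) * (u i - ℓ i)
        ≤ M * ∑ i : Fin n, (u i - ℓ i) := by
    intro x hx xh hxh
    have hS1 : ∑ i : Fin n, fderiv ℝ F xh (Pi.single i 1) * max (x i - xh i) 0
        ≤ ∑ i : Fin n, fderiv ℝ F xh (Pi.single i 1) * ((u i - xh i) / (u i - ℓ i)) * (x i - ℓ i) :=
      Finset.sum_le_sum (fun i _ => hterm1 x hx xh hxh i)
    have hS2 : ∑ i : Fin n,
          (fderiv ℝ F xh (Pi.single i 1) * ((u i - xh i) / (u i - ℓ i)) * (x i - ℓ i)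
            - fderiv ℝ F xh (Pi.single i 1) * max (x i - xh i) 0)
        ≤ ∑ i : Fin n, fderiv ℝ F xh (Pi.single i 1) * (u i - ℓ i) :=
      Finset.sum_le_sum (fun i _ => hterm2 x hx xh hxh i)
    rw [Finset.sum_sub_distrib] at hS2
    have hS3 : ∑ i : Fin n, fderiv ℝ F xh (Pi.single i 1) * (u i - ℓ i)
        ≤ M * ∑ i : Fin n, (u i - ℓ i) := by
      rw [Finset.mul_sum]
      exact Finset.sum_le_sum (fun i _ =>
        mul_le_mul_of_nonneg_right (hM xh hxh i) (le_of_lt (sub_pos.2 (hlu i))))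
    exact ⟨by linarith, by linarith, hS3⟩
  refine ⟨hpart1, ?_⟩
  intro x hx
  set S : Set ℝ := {v : ℝ | ∃ xh ∈ Set.Icc ℓ u,
      v = F xh + ∑ i : Fin n,
        fderiv ℝ F xh (Pi.single i 1) * ((u i - xh i) / (u i - ℓ i)) * (x i - ℓ i)} with hSdef
  have hmemS : (F x + ∑ i : Fin n,
      fderiv ℝ F x (Pi.single i 1) * ((u i - x i) / (u i - ℓ i)) * (x i - ℓ i)) ∈ S :=
    ⟨x, hx, rfl⟩
  have hlb : ∀ v ∈ S, F x ≤ v := by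
    rintro v ⟨xh, hxh, rfl⟩
    have h1 := overest hdiff hsub hconc hmono hx hxh
    have h2 := (hpart1 x hx xh hxh).1
    linarith
  have hne : S.Nonempty := ⟨_, hmemS⟩
  have hbdd : BddBelow S := ⟨F x, hlb⟩
  constructor
  · have := le_csInf hne hlb
    linarith
  · have hle1 : sInf S ≤ F x + ∑ i : Fin n,
        fderiv ℝ F x (Pi.single i 1) * ((u i - x i) / (u i - ℓ i)) * (x i - ℓ i) :=
      csInf_le hbdd hmemS
    have h2 := (hpart1 x hx x hx).2.1
    have h3 := (hpart1 x hx x hx).2.2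
    have h4 : ∑ i : Fin n, fderiv ℝ F x (Pi.single i 1) * max (x i - x i) 0 = 0 := by
      simp
    linarith
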